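/- Let $n \ge 7$ be a prime. There is no primitive non-constant arithmetic progression of integers of the form $x_1^2, x_2^2, x_3^n, x_4^2, x_5^2$ (five terms, with exponent pattern $(2,2,n,2,2)$). -/

import Mathlib

lemma coprime_of_prime {a b : ℤ}
    (h : ∀ ℓ : ℤ, Prime ℓ → ℓ ∣ a → ℓ ∣ b → False) : IsCoprime a b := by
  rw [Int.isCoprime_iff_gcd_eq_one]
  by_contra hg
  obtain ⟨p, hp, hdvd⟩ := Nat.exists_prime_and_dvd hg
  have hpz : Prime (p : ℤ) := Nat.prime_iff_prime_int.mp hp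
  have h1 : (p : ℤ) ∣ a := dvd_trans (Int.natCast_dvd_natCast.mpr hdvd) (Int.gcd_dvd_left a b)
  have h2 : (p : ℤ) ∣ b := dvd_trans (Int.natCast_dvd_natCast.mpr hdvd) (Int.gcd_dvd_right a b)
  exact h _ hpz h1 h2

lemma kill_coprime {ℓ a b : ℤ} (hp : Prime ℓ) (h : IsCoprime a b)
    (d1 : ℓ ∣ a) (d2 : ℓ ∣ b) : False :=
  hp.not_unit (h.isUnit_of_dvd' d1 d2)

lemma sq_decomp {a b c : ℤ} (hab : IsCoprime a b) (h : a * b = c ^ 2)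
    (ha : 0 < a) (hb : 0 < b) :
    ∃ x y : ℤ, a = x ^ 2 ∧ b = y ^ 2 ∧ (c = x * y ∨ c = -(x * y)) := by
  obtain ⟨x, hx⟩ := Int.sq_of_isCoprime hab h
  obtain ⟨y, hy⟩ := Int.sq_of_isCoprime hab.symm (by rw [mul_comm]; exact h)
  have hx' : a = x ^ 2 := by
    rcases hx with h' | h'
    · exact h'
    · nlinarith [sq_nonneg x]
  have hy' : b = y ^ 2 := by
    rcases hy with h' | h'
    · exact h'
    · nlinarith [sq_nonneg y]
  have hc : (c - x * y) * (c + x * y) = 0 := by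
    have h2 : c ^ 2 = (x * y) ^ 2 := by rw [← h, hx', hy']; ring
    linear_combination h2
  rcases mul_eq_zero.mp hc with h' | h'
  · exact ⟨x, y, hx', hy', Or.inl (by linarith)⟩
  · exact ⟨x, y, hx', hy', Or.inr (by linarith)⟩

lemma odd_of_odd_sq {x : ℤ} (h : Odd (x ^ 2)) : Odd x := by
  rcases Int.even_or_odd x with he | ho
  · exact absurd h (Int.not_odd_iff_even.mpr (he.pow_of_ne_zero two_ne_zero))
  · exact ho

lemma odd_sum_of_odd_sq_add_sq {x y : ℤ} (h : Odd (x ^ 2 + y ^ 2)) : Odd (x + y) := by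
  rcases Int.even_or_odd x with hx | hx <;> rcases Int.even_or_odd y with hy | hy
  · exact absurd h (Int.not_odd_iff_even.mpr ((hx.pow_of_ne_zero two_ne_zero).add (hy.pow_of_ne_zero two_ne_zero)))
  · exact hx.add_odd hy
  · exact hx.add_even hy
  · exact absurd h (Int.not_odd_iff_even.mpr ((hx.pow).add_odd (hy.pow)))

lemma odd_sq_add_sq_of_odd_sum {x y : ℤ} (h : Odd (x + y)) : Odd (x ^ 2 + y ^ 2) := by
  rcases Int.even_or_odd x with hx | hx <;> rcases Int.even_or_odd y with hy | hy
  · exact absurd h (Int.not_odd_iff_even.mpr (hx.add hy))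
  · exact (hx.pow_of_ne_zero two_ne_zero).add_odd hy.pow
  · exact (hx.pow).add_even (hy.pow_of_ne_zero two_ne_zero)
  · exact absurd h (Int.not_odd_iff_even.mpr (hx.add_odd hy))


-- parity kills for the main theorem
lemma zkill1 : ∀ a b c : ZMod 8, (2*c+1)^2 - (2*b+1)^2 = 2*((2*b+1)^2 - (2*a)^2) → False := by decide
lemma zkill2 : ∀ a b e : ZMod 8, (2*e+1)^2 - (2*a+1)^2 = 4*((2*b)^2 - (2*a+1)^2) → False := by decide
-- case A kills (d odd, c even)
lemma zkillA1 : ∀ k c1 h : ZMod 8, (2*k+1)^2 - 4*(2*c1)^2 = -(h^2) → False := by decide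
lemma zkillA2a : ∀ k c1 h : ZMod 8, (2*k+1)^2 - 4*(2*c1)^2 = 3*h^2 → False := by decide
lemma zkillA2b : ∀ k c1 h : ZMod 8, (2*k+1)^2 - 4*(2*c1)^2 = -(3*h^2) → False := by decide
-- case B kills (d odd, c odd)
lemma zkillB1a : ∀ k j h : ZMod 8, (2*k+1)^2 - 4*(2*j+1)^2 = h^2 → False := by decide
lemma zkillB1b : ∀ k j h : ZMod 8, (2*k+1)^2 - 4*(2*j+1)^2 = -(h^2) → False := by decide
lemma zkillB2a : ∀ k j h : ZMod 8, (2*k+1)^2 - 4*(2*j+1)^2 = 3*h^2 → False := by decide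
lemma zkillB2b : ∀ k j m : ZMod 8, (2*k+1)^2 - 4*(2*j+1)^2 = -(3*(2*m)^2) → False := by decide

lemma QtoR_aux (u v z₀ m m' Y₁ : ℤ) (hmpos : 0 < m) (hm'pos : 0 < m')
    (hcop : IsCoprime m m') (h3 : (3:ℤ) ∣ m) (hprod : m * m' = 3 * Y₁ ^ 2)
    (hz0 : z₀ = m + m') (hk1 : (u ^ 2 + v ^ 2) ^ 2 = z₀ ^ 2 + 4 * Y₁ ^ 2) (hY1 : Y₁ ≠ 0)
    (hodd : Odd (u ^ 2 + v ^ 2)) :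
    ∃ γ δ : ℤ, IsCoprime γ δ ∧ γ * δ ≠ 0 ∧ Odd (γ + δ) ∧
      (γ ^ 2 + δ ^ 2) * (9 * γ ^ 2 + δ ^ 2) = (u ^ 2 + v ^ 2) ^ 2 := by
  obtain ⟨m₁, hm₁⟩ := h3
  have h3m : (3:ℤ) * (m₁ * m') = 3 * Y₁ ^ 2 := by linear_combination hprod - m' * hm₁
  have hprod₁ : m₁ * m' = Y₁ ^ 2 := by
    apply mul_left_cancel₀ (by norm_num : (3:ℤ) ≠ 0) h3m
  have hm₁pos : 0 < m₁ := by nlinarith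
  have hcop₁ : IsCoprime m₁ m' := by
    have : IsCoprime ((3:ℤ) * m₁) m' := by rwa [← hm₁]
    exact this.of_mul_left_right
  obtain ⟨x, y, hx, hy, hYc⟩ := sq_decomp hcop₁ hprod₁ hm₁pos hm'pos
  have hz0e : z₀ = 3 * x ^ 2 + y ^ 2 := by rw [hz0, hm₁, hx, hy]
  have hY1sq : Y₁ ^ 2 = x ^ 2 * y ^ 2 := by
    rcases hYc with h | h
    · linear_combination (Y₁ + x * y) * h
    · linear_combination (Y₁ - x * y) * h
  have heq : (x ^ 2 + y ^ 2) * (9 * x ^ 2 + y ^ 2) = (u ^ 2 + v ^ 2) ^ 2 := by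
    have k2 : z₀ ^ 2 = (3 * x ^ 2 + y ^ 2) ^ 2 := by rw [hz0e]
    linear_combination -hk1 - k2 - 4 * hY1sq
  refine ⟨x, y, ?_, ?_, ?_, heq⟩
  · apply coprime_of_prime
    intro ℓ hℓ d1 d2
    exact kill_coprime hℓ hcop₁ (hx ▸ dvd_pow d1 two_ne_zero) (hy ▸ dvd_pow d2 two_ne_zero)
  · intro h0
    apply hY1
    have : Y₁ ^ 2 = 0 := by rw [hY1sq]; nlinarith [mul_eq_zero.mp h0, sq_nonneg x, sq_nonneg y]
    exact pow_eq_zero_iff two_ne_zero |>.mp this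
  · apply odd_sum_of_odd_sq_add_sq
    have hodd2 : Odd ((x ^ 2 + y ^ 2) * (9 * x ^ 2 + y ^ 2)) := heq ▸ hodd.pow
    exact (Int.odd_mul.mp hodd2).1

lemma QtoR (u v z : ℤ) (hcop : IsCoprime u v) (hne : u * v ≠ 0) (hpar : Odd (u + v))
    (hz : z ^ 2 = u ^ 4 + u ^ 2 * v ^ 2 + v ^ 4) :
    ∃ γ δ : ℤ, IsCoprime γ δ ∧ γ * δ ≠ 0 ∧ Odd (γ + δ) ∧
      (γ ^ 2 + δ ^ 2) * (9 * γ ^ 2 + δ ^ 2) = (u ^ 2 + v ^ 2) ^ 2 := by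
  have hmix : (Even u ∧ Odd v) ∨ (Odd u ∧ Even v) := by
    rcases Int.even_or_odd u with hu | hu <;> rcases Int.even_or_odd v with hv | hv
    · exact absurd hpar (Int.not_odd_iff_even.mpr (hu.add hv))
    · exact Or.inl ⟨hu, hv⟩
    · exact Or.inr ⟨hu, hv⟩
    · exact absurd hpar (Int.not_odd_iff_even.mpr (hu.add_odd hv))
  have hXodd : Odd (u ^ 2 - v ^ 2) := by
    rcases hmix with ⟨hu, hv⟩ | ⟨hu, hv⟩
    · exact (hu.pow_of_ne_zero two_ne_zero).sub_odd hv.pow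
    · exact (hu.pow).sub_even (hv.pow_of_ne_zero two_ne_zero)
  have hYeven : Even (u * v) := by
    rcases hmix with ⟨hu, hv⟩ | ⟨hu, hv⟩
    · exact hu.mul_right v
    · exact hv.mul_left u
  set z₀ := |z| with hz₀def
  have hz0nn : 0 ≤ z₀ := abs_nonneg z
  have hz2 : z₀ ^ 2 - (u ^ 2 - v ^ 2) ^ 2 = 3 * (u * v) ^ 2 := by
    rw [sq_abs]; linear_combination hz
  have hYsqpos : 0 < (u * v) ^ 2 := by positivity
  have hz₀odd : Odd z₀ := by
    apply odd_of_odd_sq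
    have : z₀ ^ 2 = (u ^ 2 - v ^ 2) ^ 2 + 3 * (u * v) ^ 2 := by linarith
    rw [this]
    exact (hXodd.pow).add_even ((hYeven.pow_of_ne_zero two_ne_zero).mul_left 3)
  have hX1 : u ^ 2 - v ^ 2 < z₀ := by nlinarith
  have hX2 : -z₀ < u ^ 2 - v ^ 2 := by nlinarith
  obtain ⟨m, hm⟩ := hz₀odd.sub_odd hXodd
  obtain ⟨m', hm'⟩ := hz₀odd.add_odd hXodd
  obtain ⟨Y₁, hY₁⟩ := hYeven
  have e1 : z₀ - (u ^ 2 - v ^ 2) = 2 * m := by linarith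
  have e2 : z₀ + (u ^ 2 - v ^ 2) = 2 * m' := by linarith
  have e3 : u * v = 2 * Y₁ := by linarith
  have hmpos : 0 < m := by linarith
  have hm'pos : 0 < m' := by linarith
  have hmm' : m * m' = 3 * Y₁ ^ 2 := by
    have h4 : (2 * m) * (2 * m') = 3 * (2 * Y₁) ^ 2 := by
      rw [← e1, ← e2, ← e3]; linear_combination hz2
    linarith [h4]
  have hz0s : z₀ = m + m' := by linarith
  have hY1ne : Y₁ ≠ 0 := by
    intro h; apply hne; rw [e3, h]; ring
  have hcopmm : IsCoprime m m' := by
    apply coprime_of_prime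
    intro ℓ hℓ d1 d2
    have dz : ℓ ∣ z₀ := hz0s ▸ dvd_add d1 d2
    have dX : ℓ ∣ (u ^ 2 - v ^ 2) := by
      have hXe : u ^ 2 - v ^ 2 = m' - m := by linarith
      exact hXe ▸ dvd_sub d2 d1
    have dY : ℓ ∣ u * v := by
      have dprod : ℓ ∣ 3 * Y₁ ^ 2 := hmm' ▸ d1.mul_right m'
      rcases hℓ.dvd_mul.mp dprod with h3 | hY2
      · have h3z : (3:ℤ) ∣ z₀ := ((hℓ.associated_of_dvd Int.prime_three h3).symm.dvd).trans dz
        have h3X : (3:ℤ) ∣ (u ^ 2 - v ^ 2) :=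
          ((hℓ.associated_of_dvd Int.prime_three h3).symm.dvd).trans dX
        have h9 : (9:ℤ) ∣ 3 * (u * v) ^ 2 := by
          rw [← hz2]
          obtain ⟨a, ha⟩ := h3z
          obtain ⟨b, hb⟩ := h3X
          exact ⟨a ^ 2 - b ^ 2, by rw [ha, hb]; ring⟩
        have h3Y : (3:ℤ) ∣ (u * v) := by
          obtain ⟨k, hk⟩ := h9
          have : (u * v) ^ 2 = 3 * k := by linarith
          exact Int.prime_three.dvd_of_dvd_pow (n := 2) ⟨k, this⟩
        exact h3.trans h3Y
      · have : ℓ ∣ Y₁ := hℓ.dvd_of_dvd_pow hY2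
        exact this.trans ⟨2, by linarith⟩
    rcases hℓ.dvd_mul.mp dY with hdu | hdv
    · have hv2 : ℓ ∣ v ^ 2 := by
        have hve : v ^ 2 = u ^ 2 - (u ^ 2 - v ^ 2) := by ring
        exact hve ▸ dvd_sub (dvd_pow hdu two_ne_zero) dX
      exact kill_coprime hℓ hcop hdu (hℓ.dvd_of_dvd_pow hv2)
    · have hu2 : ℓ ∣ u ^ 2 := by
        have hue : u ^ 2 = (u ^ 2 - v ^ 2) + v ^ 2 := by ring
        exact hue ▸ dvd_add dX (dvd_pow hdv two_ne_zero)
      exact kill_coprime hℓ hcop (hℓ.dvd_of_dvd_pow hu2) hdv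
  have hodd : Odd (u ^ 2 + v ^ 2) := odd_sq_add_sq_of_odd_sum hpar
  have hk1 : (u ^ 2 + v ^ 2) ^ 2 = z₀ ^ 2 + 4 * Y₁ ^ 2 := by
    have : (2 * Y₁) ^ 2 = (u * v) ^ 2 := by rw [e3]
    linear_combination -hz2 - this
  have h3mm : (3:ℤ) ∣ m * m' := ⟨Y₁ ^ 2, hmm'⟩
  rcases Int.prime_three.dvd_mul.mp h3mm with h3m | h3m'
  · exact QtoR_aux u v z₀ m m' Y₁ hmpos hm'pos hcopmm h3m hmm' hz0s hk1 hY1ne hodd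
  · exact QtoR_aux u v z₀ m' m Y₁ hm'pos hmpos hcopmm.symm h3m'
      (by linear_combination hmm') (by linarith) hk1 hY1ne hodd

set_option maxHeartbeats 2000000 in
lemma lemR : ∀ (n : ℕ) (w α β : ℤ), w.natAbs = n → IsCoprime α β → α * β ≠ 0 →
    Odd (α + β) → (α ^ 2 + β ^ 2) * (9 * α ^ 2 + β ^ 2) = w ^ 2 → False := by
  intro n
  induction n using Nat.strong_induction_on with
  | _ n ih =>
  intro w α β hn hcop hne hpar heq
  have hα : α ≠ 0 := left_ne_zero_of_mul hne
  have hβ : β ≠ 0 := right_ne_zero_of_mul hne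
  have hoddF₁ : Odd (α ^ 2 + β ^ 2) := odd_sq_add_sq_of_odd_sum hpar
  have hoddF₂ : Odd (9 * α ^ 2 + β ^ 2) := by
    have h : 9 * α ^ 2 + β ^ 2 = (α ^ 2 + β ^ 2) + (4 * α ^ 2 + (4 * α ^ 2)) := by ring
    rw [h]
    exact hoddF₁.add_even ⟨4 * α ^ 2, rfl⟩
  have hF₁pos : 0 < α ^ 2 + β ^ 2 := by positivity
  have hF₂pos : 0 < 9 * α ^ 2 + β ^ 2 := by positivity
  have hcopF : IsCoprime (α ^ 2 + β ^ 2) (9 * α ^ 2 + β ^ 2) := by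
    apply coprime_of_prime
    intro ℓ hℓ d1 d2
    have hd8a : ℓ ∣ 8 * α ^ 2 := by
      have h : 8 * α ^ 2 = (9 * α ^ 2 + β ^ 2) - (α ^ 2 + β ^ 2) := by ring
      exact h ▸ dvd_sub d2 d1
    have hd8b : ℓ ∣ 8 * β ^ 2 := by
      have h : 8 * β ^ 2 = 9 * (α ^ 2 + β ^ 2) - (9 * α ^ 2 + β ^ 2) := by ring
      exact h ▸ dvd_sub (d1.mul_left 9) d2
    have hℓ2 : ¬ (ℓ ∣ 2) := by
      intro h2
      have h2' : (2:ℤ) ∣ (α ^ 2 + β ^ 2) :=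
        ((hℓ.associated_of_dvd Int.prime_two h2).symm.dvd).trans d1
      obtain ⟨kk, hkk⟩ := h2'
      exact (Int.not_odd_iff_even.mpr ⟨kk, by linarith only [hkk]⟩) hoddF₁
    have hda : ℓ ∣ α := by
      rcases hℓ.dvd_mul.mp hd8a with h8 | ha
      · exact absurd (hℓ.dvd_of_dvd_pow (show ℓ ∣ (2:ℤ)^3 by norm_num; exact h8)) hℓ2
      · exact hℓ.dvd_of_dvd_pow ha
    have hdb : ℓ ∣ β := by
      rcases hℓ.dvd_mul.mp hd8b with h8 | hb
      · exact absurd (hℓ.dvd_of_dvd_pow (show ℓ ∣ (2:ℤ)^3 by norm_num; exact h8)) hℓ2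
      · exact hℓ.dvd_of_dvd_pow hb
    exact kill_coprime hℓ hcop hda hdb
  obtain ⟨s, t, hFs, hFt, hwst⟩ := sq_decomp hcopF heq hF₁pos hF₂pos
  have hs0 : α ^ 2 + β ^ 2 = |s| ^ 2 := by rw [sq_abs]; exact hFs
  have ht0 : 9 * α ^ 2 + β ^ 2 = |t| ^ 2 := by rw [sq_abs]; exact hFt
  have hs₀pos : 0 < |s| := by
    rcases (abs_nonneg s).lt_or_eq with h | h
    · exact h
    · exfalso; rw [← h] at hs0; simp at hs0
      linarith only [hs0, sq_pos_of_ne_zero hα, sq_nonneg β]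
  have ht₀pos : 0 < |t| := by
    rcases (abs_nonneg t).lt_or_eq with h | h
    · exact h
    · exfalso; rw [← h] at ht0; simp at ht0
      linarith only [ht0, sq_pos_of_ne_zero hα, sq_nonneg β]
  have hs1 : (1:ℤ) ≤ |s| := hs₀pos
  have ht1 : (1:ℤ) ≤ |t| := ht₀pos
  have hodds : Odd |s| := odd_of_odd_sq (hs0 ▸ hoddF₁)
  have hoddt : Odd |t| := odd_of_odd_sq (ht0 ▸ hoddF₂)
  have hwabs : (w.natAbs : ℤ) = |s| * |t| := by
    have h1 : |w| = |s| * |t| := by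
      rcases hwst with h | h <;> rw [h] <;> simp [abs_mul]
    rw [Int.abs_eq_natAbs] at h1
    exact h1
  have hwge : |t| ≤ (w.natAbs : ℤ) := by nlinarith only [hwabs, hs1, ht₀pos]
  have hts : |t| ^ 2 - |s| ^ 2 = 8 * α ^ 2 := by rw [← hs0, ← ht0]; ring
  have h9st : 9 * |s| ^ 2 - |t| ^ 2 = 8 * β ^ 2 := by rw [← hs0, ← ht0]; ring
  have htgt : |s| < |t| := by
    by_contra hcon
    push_neg at hcon
    have h1 : |t| ^ 2 ≤ |s| ^ 2 := by nlinarith only [hcon, abs_nonneg t, abs_nonneg s]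
    linarith only [h1, hts, sq_pos_of_ne_zero hα]
  obtain ⟨u₁, hu₁⟩ := hoddt.sub_odd hodds
  obtain ⟨v₁, hv₁⟩ := hoddt.add_odd hodds
  have e1 : |t| - |s| = 2 * u₁ := by linarith only [hu₁]
  have e2 : |t| + |s| = 2 * v₁ := by linarith only [hv₁]
  have hu₁pos : 0 < u₁ := by linarith only [e1, htgt]
  have hv₁pos : 0 < v₁ := by linarith only [e2, hs₀pos, ht₀pos]
  have huv : u₁ * v₁ = 2 * α ^ 2 := by
    have h4 : (2 * u₁) * (2 * v₁) = 8 * α ^ 2 := by rw [← e1, ← e2]; linear_combination hts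
    linarith only [h4]
  have hcopu : IsCoprime u₁ v₁ := by
    apply coprime_of_prime
    intro ℓ hℓ d1 d2
    have dt : ℓ ∣ |t| := by
      have h : |t| = u₁ + v₁ := by linarith only [e1, e2]
      exact h ▸ dvd_add d1 d2
    have ds : ℓ ∣ |s| := by
      have h : |s| = v₁ - u₁ := by linarith only [e1, e2]
      exact h ▸ dvd_sub d2 d1
    exact kill_coprime hℓ hcopF (hs0 ▸ dvd_pow ds two_ne_zero) (ht0 ▸ dvd_pow dt two_ne_zero)
  have main : ∀ (c D : ℤ), |t| = 2 * c ^ 2 + D ^ 2 → |s| ^ 2 = (D ^ 2 - 2 * c ^ 2) ^ 2 →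
      α ^ 2 = c ^ 2 * D ^ 2 → Odd D → IsCoprime c D → c ≠ 0 → D ≠ 0 → False := by
    intro c D hT hS ha2 hoddD hcopcD hc0 hD0
    obtain ⟨kD, hkD⟩ := hoddD
    have hoddD : Odd D := ⟨kD, hkD⟩
    have h8 : 8 * β ^ 2 = 8 * ((D ^ 2 - c ^ 2) * (D ^ 2 - 4 * c ^ 2)) := by
      linear_combination -h9st + 9 * hS - (|t| + 2 * c ^ 2 + D ^ 2) * hT
    have hβ2 : β ^ 2 = (D ^ 2 - c ^ 2) * (D ^ 2 - 4 * c ^ 2) :=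
      mul_left_cancel₀ (by norm_num : (8:ℤ) ≠ 0) h8
    have hD2ge1 : (1:ℤ) ≤ D ^ 2 := by
      have h1 : (1:ℤ) ≤ |D| := Int.one_le_abs hD0
      nlinarith only [h1, sq_abs D, abs_nonneg D]
    have hc2pos : (0:ℤ) < c ^ 2 := sq_pos_of_ne_zero hc0
    rcases Int.even_or_odd c with hEc | hOc
    · -- CASE A : c even
      obtain ⟨c₁, hc₁⟩ := hEc
      have hc1e : c = 2 * c₁ := by linarith
      have hc₁0 : c₁ ≠ 0 := by intro h; apply hc0; rw [hc1e, h]; ring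
      by_cases h3 : (3:ℤ) ∣ (D ^ 2 - 4 * c ^ 2)
      · -- A2 : kill mod 8
        obtain ⟨H, hH⟩ := h3
        have h3' : D ^ 2 - c ^ 2 = 3 * (H + c ^ 2) := by linarith only [hH]
        have h9FH : (3 * (H + c ^ 2)) * (3 * H) = β ^ 2 := by
          rw [← h3', ← hH]; linear_combination -hβ2
        have h3β : (3:ℤ) ∣ β := by
          apply Int.prime_three.dvd_of_dvd_pow (n := 2)
          exact ⟨3 * ((H + c ^ 2) * H), by linear_combination -h9FH⟩
        obtain ⟨β₁, hβ₁⟩ := h3β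
        have hFH : (H + c ^ 2) * H = β₁ ^ 2 := by
          apply mul_left_cancel₀ (by norm_num : (9:ℤ) ≠ 0)
          linear_combination h9FH + (β + 3 * β₁) * hβ₁
        have hcopFH : IsCoprime (H + c ^ 2) H := by
          apply coprime_of_prime
          intro ℓ hℓ d1 d2
          have dc : ℓ ∣ c := hℓ.dvd_of_dvd_pow (n := 2)
            (by have h : c ^ 2 = (H + c ^ 2) - H := by ring
                exact h ▸ dvd_sub d1 d2)
          have dD : ℓ ∣ D := hℓ.dvd_of_dvd_pow (n := 2)
            (by have h : D ^ 2 = 3 * H + 4 * c ^ 2 := by linarith only [hH]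
                exact h ▸ dvd_add (d2.mul_left 3) ((dvd_pow dc two_ne_zero).mul_left 4))
          exact kill_coprime hℓ hcopcD dc dD
        obtain ⟨h', hh'⟩ := Int.sq_of_isCoprime hcopFH.symm (show H * (H + c ^ 2) = β₁ ^ 2 by linear_combination hFH)
        rcases hh' with hh | hh
        · have hkill : ((2 * kD + 1) ^ 2 - 4 * (2 * c₁) ^ 2 : ℤ) = 3 * h' ^ 2 := by
            rw [← hkD, ← hc1e]; linear_combination hH + 3 * hh
          have hz8 := congrArg (fun x : ℤ => (x : ZMod 8)) hkill
          push_cast at hz8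
          exact zkillA2a _ _ _ hz8
        · have hkill : ((2 * kD + 1) ^ 2 - 4 * (2 * c₁) ^ 2 : ℤ) = -(3 * h' ^ 2) := by
            rw [← hkD, ← hc1e]; linear_combination hH + 3 * hh
          have hz8 := congrArg (fun x : ℤ => (x : ZMod 8)) hkill
          push_cast at hz8
          exact zkillA2b _ _ _ hz8
      · -- A1 : descent
        have hcopP : IsCoprime (D ^ 2 - c ^ 2) (D ^ 2 - 4 * c ^ 2) := by
          apply coprime_of_prime
          intro ℓ hℓ d1 d2
          have hd3c : ℓ ∣ 3 * c ^ 2 := by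
            have h : 3 * c ^ 2 = (D ^ 2 - c ^ 2) - (D ^ 2 - 4 * c ^ 2) := by ring
            exact h ▸ dvd_sub d1 d2
          have hℓn3 : ¬ (ℓ ∣ 3) := by
            intro hd3
            exact h3 (((hℓ.associated_of_dvd Int.prime_three hd3).symm.dvd).trans d2)
          have dc : ℓ ∣ c := by
            rcases hℓ.dvd_mul.mp hd3c with h' | h'
            · exact absurd h' hℓn3
            · exact hℓ.dvd_of_dvd_pow h'
          have dD : ℓ ∣ D := by
            apply hℓ.dvd_of_dvd_pow (n := 2)
            have h : D ^ 2 = (D ^ 2 - c ^ 2) + c ^ 2 := by ring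
            exact h ▸ dvd_add d1 (dvd_pow dc two_ne_zero)
          exact kill_coprime hℓ hcopcD dc dD
        obtain ⟨h', hh'⟩ := Int.sq_of_isCoprime hcopP.symm (show (D ^ 2 - 4 * c ^ 2) * (D ^ 2 - c ^ 2) = β ^ 2 by linear_combination -hβ2)
        rcases hh' with hh | hh
        swap
        · have hkill : ((2 * kD + 1) ^ 2 - 4 * (2 * c₁) ^ 2 : ℤ) = -(h' ^ 2) := by
            rw [← hkD, ← hc1e]; linear_combination hh
          have hz8 := congrArg (fun x : ℤ => (x : ZMod 8)) hkill
          push_cast at hz8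
          exact zkillA1 _ _ _ hz8
        have hne_h : h' ≠ 0 := by
          intro h0; rw [h0] at hh; apply hβ
          have hb0 : β ^ 2 = 0 := by rw [hβ2, hh]; ring
          exact pow_eq_zero_iff two_ne_zero |>.mp hb0
        obtain ⟨g, hg'⟩ := Int.sq_of_isCoprime hcopP hβ2.symm
        rcases hg' with hg | hg
        swap
        · have hbb : β ^ 2 = -(g ^ 2 * h' ^ 2) := by rw [hβ2, hg, hh]; ring
          have hb1 : (0:ℤ) < β ^ 2 := sq_pos_of_ne_zero hβ
          have hb2 : (0:ℤ) ≤ g ^ 2 * h' ^ 2 := by positivity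
          linarith
        have hoddg : Odd |g| := by
          apply odd_of_odd_sq
          rw [sq_abs, ← hg]
          exact hoddD.pow.sub_even ⟨2 * c₁ ^ 2, by rw [hc1e]; ring⟩
        have hoddh : Odd |h'| := by
          apply odd_of_odd_sq
          rw [sq_abs, ← hh]
          exact hoddD.pow.sub_even ⟨8 * c₁ ^ 2, by rw [hc1e]; ring⟩
        have hg0 : D ^ 2 - c ^ 2 = |g| ^ 2 := by rw [sq_abs]; exact hg
        have hh0 : D ^ 2 - 4 * c ^ 2 = |h'| ^ 2 := by rw [sq_abs]; exact hh
        have hgh : |g| ^ 2 - |h'| ^ 2 = 3 * c ^ 2 := by linarith only [hg0, hh0]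
        have hggth : |h'| < |g| := by
          by_contra hcon
          push_neg at hcon
          have h1 : |g| ^ 2 ≤ |h'| ^ 2 := by nlinarith only [hcon, abs_nonneg g, abs_nonneg h']
          linarith only [h1, hgh, hc2pos]
        obtain ⟨m₁, hm₁⟩ := hoddg.sub_odd hoddh
        obtain ⟨m₂, hm₂⟩ := hoddg.add_odd hoddh
        have f1 : |g| - |h'| = 2 * m₁ := by linarith only [hm₁]
        have f2 : |g| + |h'| = 2 * m₂ := by linarith only [hm₂]
        have hm₁pos : 0 < m₁ := by linarith only [f1, hggth]
        have hm₂pos : 0 < m₂ := by linarith only [f2, hggth, abs_nonneg h']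
        have hm12 : m₁ * m₂ = 3 * c₁ ^ 2 := by
          have h4 : (2 * m₁) * (2 * m₂) = 3 * (2 * c₁) ^ 2 := by
            rw [← f1, ← f2, ← hc1e]; linear_combination hgh
          linarith only [h4]
        have hcopm : IsCoprime m₁ m₂ := by
          apply coprime_of_prime
          intro ℓ hℓ d1 d2
          have dg : ℓ ∣ |g| := by
            have h : |g| = m₁ + m₂ := by linarith only [f1, f2]
            exact h ▸ dvd_add d1 d2
          have dh : ℓ ∣ |h'| := by
            have h : |h'| = m₂ - m₁ := by linarith only [f1, f2]
            exact h ▸ dvd_sub d2 d1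
          have dc : ℓ ∣ c := by
            rcases hℓ.dvd_mul.mp (hm12 ▸ d1.mul_right m₂ : ℓ ∣ 3 * c₁ ^ 2) with hp3 | hpc
            · exfalso
              have h3g : (3:ℤ) ∣ |g| :=
                ((hℓ.associated_of_dvd Int.prime_three hp3).symm.dvd).trans dg
              have h3h : (3:ℤ) ∣ |h'| :=
                ((hℓ.associated_of_dvd Int.prime_three hp3).symm.dvd).trans dh
              have h9 : (9:ℤ) ∣ 3 * c ^ 2 := by
                rw [← hgh]
                obtain ⟨a, ha⟩ := h3g; obtain ⟨b, hb⟩ := h3h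
                exact ⟨a ^ 2 - b ^ 2, by rw [ha, hb]; ring⟩
              have h3c : (3:ℤ) ∣ c := by
                apply Int.prime_three.dvd_of_dvd_pow (n := 2)
                obtain ⟨k, hk⟩ := h9
                exact ⟨k, by linarith only [hk]⟩
              have h3D : (3:ℤ) ∣ D := by
                apply Int.prime_three.dvd_of_dvd_pow (n := 2)
                obtain ⟨a, ha⟩ := h3g; obtain ⟨b, hb⟩ := h3c
                exact ⟨3 * a ^ 2 + 3 * b ^ 2, by
                  have h : D ^ 2 = |g| ^ 2 + c ^ 2 := by linarith only [hg0]
                  rw [h, ha, hb]; ring⟩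
              exact kill_coprime Int.prime_three hcopcD h3c h3D
            · have hdc1 : ℓ ∣ c₁ := hℓ.dvd_of_dvd_pow hpc
              exact hc1e ▸ hdc1.mul_left 2
          have dD : ℓ ∣ D := by
            apply hℓ.dvd_of_dvd_pow (n := 2)
            have h : D ^ 2 = |g| ^ 2 + c ^ 2 := by linarith only [hg0]
            exact h ▸ dvd_add (dvd_pow dg two_ne_zero) (dvd_pow dc two_ne_zero)
          exact kill_coprime hℓ hcopcD dc dD
        have hdesc : ∀ (mA mB : ℤ), 0 < mA → 0 < mB → IsCoprime mA mB → (3:ℤ) ∣ mA →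
            mA * mB = 3 * c₁ ^ 2 → |g| = mA + mB → False := by
          intro mA mB hApos hBpos hcopAB h3A hprodAB hgAB
          obtain ⟨mA', hmA'⟩ := h3A
          have hprod' : mA' * mB = c₁ ^ 2 := by
            apply mul_left_cancel₀ (by norm_num : (3:ℤ) ≠ 0)
            linear_combination hprodAB - mB * hmA'
          have hA'pos : 0 < mA' := by linarith only [hmA', hApos]
          have hcop' : IsCoprime mA' mB := by
            have h : IsCoprime ((3:ℤ) * mA') mB := by rwa [← hmA']
            exact h.of_mul_left_right
          obtain ⟨γ, δ, hγ, hδ, hc₁γδ⟩ := sq_decomp hcop' hprod' hA'pos hBpos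
          have hgform : |g| = 3 * γ ^ 2 + δ ^ 2 := by rw [hgAB, hmA', hγ, hδ]
          have hc₁sq : c₁ ^ 2 = γ ^ 2 * δ ^ 2 := by
            rcases hc₁γδ with h | h
            · linear_combination (c₁ + γ * δ) * h
            · linear_combination (c₁ - γ * δ) * h
          have hDsq : (γ ^ 2 + δ ^ 2) * (9 * γ ^ 2 + δ ^ 2) = D ^ 2 := by
            have hD2 : D ^ 2 = |g| ^ 2 + c ^ 2 := by linarith only [hg0]
            rw [hD2, hgform, hc1e]
            linear_combination -4 * hc₁sq
          have hγδne : γ * δ ≠ 0 := by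
            intro h0; apply hc₁0
            have hcc : c₁ ^ 2 = 0 := by
              rw [hc₁sq]
              rcases mul_eq_zero.mp h0 with h | h <;> rw [h] <;> ring
            exact pow_eq_zero_iff two_ne_zero |>.mp hcc
          have hcopγδ : IsCoprime γ δ := by
            apply coprime_of_prime
            intro ℓ hℓ d1 d2
            exact kill_coprime hℓ hcop' (hγ ▸ dvd_pow d1 two_ne_zero)
              (hδ ▸ dvd_pow d2 two_ne_zero)
          have hoddγδ : Odd (γ + δ) := by
            apply odd_sum_of_odd_sq_add_sq
            have hoddD2 : Odd ((γ ^ 2 + δ ^ 2) * (9 * γ ^ 2 + δ ^ 2)) := by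
              rw [hDsq]; exact hoddD.pow
            exact (Int.odd_mul.mp hoddD2).1
          have hlt : D.natAbs < n := by
            have h1 : (1:ℤ) ≤ |D| := Int.one_le_abs hD0
            have h2 : |D| ^ 2 = D ^ 2 := sq_abs D
            have habsle : |D| ≤ D ^ 2 := by nlinarith only [h1, h2, abs_nonneg D]
            have h3lt : (D.natAbs : ℤ) < (w.natAbs : ℤ) := by
              rw [← Int.abs_eq_natAbs]
              linarith only [habsle, hT, hc2pos, hwge]
            rw [← hn]
            exact_mod_cast h3lt
          exact ih D.natAbs hlt D γ δ rfl hcopγδ hγδne hoddγδ hDsq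
        rcases Int.prime_three.dvd_mul.mp (⟨c₁ ^ 2, hm12⟩ : (3:ℤ) ∣ m₁ * m₂) with h3m | h3m
        · exact hdesc m₁ m₂ hm₁pos hm₂pos hcopm h3m hm12 (by linarith only [f1, f2])
        · exact hdesc m₂ m₁ hm₂pos hm₁pos hcopm.symm h3m (by linear_combination hm12)
            (by linarith only [f1, f2])
    · -- CASE B : c odd
      obtain ⟨jc, hjc⟩ := hOc
      by_cases h3 : (3:ℤ) ∣ (D ^ 2 - 4 * c ^ 2)
      · -- B2 : descent via QtoR
        obtain ⟨H, hH⟩ := h3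
        have h3' : D ^ 2 - c ^ 2 = 3 * (H + c ^ 2) := by linarith only [hH]
        have h9FH : (3 * (H + c ^ 2)) * (3 * H) = β ^ 2 := by
          rw [← h3', ← hH]; linear_combination -hβ2
        have h3β : (3:ℤ) ∣ β := by
          apply Int.prime_three.dvd_of_dvd_pow (n := 2)
          exact ⟨3 * ((H + c ^ 2) * H), by linear_combination -h9FH⟩
        obtain ⟨β₁, hβ₁⟩ := h3β
        have hβ₁ne : β₁ ≠ 0 := by intro h0; apply hβ; rw [hβ₁, h0]; ring
        have hFH : (H + c ^ 2) * H = β₁ ^ 2 := by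
          apply mul_left_cancel₀ (by norm_num : (9:ℤ) ≠ 0)
          linear_combination h9FH + (β + 3 * β₁) * hβ₁
        have hcopFH : IsCoprime (H + c ^ 2) H := by
          apply coprime_of_prime
          intro ℓ hℓ d1 d2
          have dc : ℓ ∣ c := hℓ.dvd_of_dvd_pow (n := 2)
            (by have h : c ^ 2 = (H + c ^ 2) - H := by ring
                exact h ▸ dvd_sub d1 d2)
          have dD : ℓ ∣ D := hℓ.dvd_of_dvd_pow (n := 2)
            (by have h : D ^ 2 = 3 * H + 4 * c ^ 2 := by linarith only [hH]
                exact h ▸ dvd_add (d2.mul_left 3) ((dvd_pow dc two_ne_zero).mul_left 4))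
          exact kill_coprime hℓ hcopcD dc dD
        obtain ⟨h', hh'⟩ := Int.sq_of_isCoprime hcopFH.symm (show H * (H + c ^ 2) = β₁ ^ 2 by linear_combination hFH)
        rcases hh' with hh | hh
        · have hkill : ((2 * kD + 1) ^ 2 - 4 * (2 * jc + 1) ^ 2 : ℤ) = 3 * h' ^ 2 := by
            rw [← hkD, ← hjc]; linear_combination hH + 3 * hh
          have hz8 := congrArg (fun x : ℤ => (x : ZMod 8)) hkill
          push_cast at hz8
          exact zkillB2a _ _ _ hz8
        have hoddh : Odd h' := by
          rcases Int.even_or_odd h' with hE | hO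
          · exfalso
            obtain ⟨mh, hmh⟩ := hE
            have hkill : ((2 * kD + 1) ^ 2 - 4 * (2 * jc + 1) ^ 2 : ℤ) = -(3 * (2 * mh) ^ 2) := by
              rw [← hkD, ← hjc]
              have hm : h' = 2 * mh := by linarith
              rw [hH, hh, hm]; ring
            have hz8 := congrArg (fun x : ℤ => (x : ZMod 8)) hkill
            push_cast at hz8
            exact zkillB2b _ _ _ hz8
          · exact hO
        obtain ⟨f, hf'⟩ := Int.sq_of_isCoprime hcopFH (show (H + c ^ 2) * H = β₁ ^ 2 from hFH)
        rcases hf' with hf | hf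
        · exfalso
          have hbb : β₁ ^ 2 = -(f ^ 2 * h' ^ 2) := by rw [← hFH, hf, hh]; ring
          have hb1 : (0:ℤ) < β₁ ^ 2 := sq_pos_of_ne_zero hβ₁ne
          have hb2 : (0:ℤ) ≤ f ^ 2 * h' ^ 2 := by positivity
          linarith
        have hfne : f ≠ 0 := by
          intro h0; apply hβ₁ne
          have hb0 : β₁ ^ 2 = 0 := by rw [← hFH, hf, h0]; ring
          exact pow_eq_zero_iff two_ne_zero |>.mp hb0
        have ef : c ^ 2 - D ^ 2 = 3 * f ^ 2 := by
          linear_combination -h3' - 3 * hf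
        have eh : 4 * c ^ 2 - D ^ 2 = 3 * h' ^ 2 := by
          linear_combination -hH - 3 * hh
        have hch : h' ^ 2 = c ^ 2 + f ^ 2 := by linarith only [ef, eh]
        have hD2f : D ^ 2 = c ^ 2 - 3 * f ^ 2 := by linarith only [ef]
        have hoddh0 : Odd |h'| := odd_abs.mpr hoddh
        have hoddD0 : Odd |D| := odd_abs.mpr hoddD
        have hhD : |h'| ^ 2 - |D| ^ 2 = 4 * f ^ 2 := by
          rw [sq_abs, sq_abs]; linarith only [hch, hD2f]
        have hgt : |D| < |h'| := by
          by_contra hcon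
          push_neg at hcon
          have h1 : |h'| ^ 2 ≤ |D| ^ 2 := by nlinarith only [hcon, abs_nonneg h', abs_nonneg D]
          linarith only [h1, hhD, sq_pos_of_ne_zero hfne]
        obtain ⟨k₁, hk₁⟩ := hoddh0.sub_odd hoddD0
        obtain ⟨k₂, hk₂⟩ := hoddh0.add_odd hoddD0
        have g1 : |h'| - |D| = 2 * k₁ := by linarith only [hk₁]
        have g2 : |h'| + |D| = 2 * k₂ := by linarith only [hk₂]
        have hk₁pos : 0 < k₁ := by linarith only [g1, hgt]
        have hk₂pos : 0 < k₂ := by linarith only [g2, hgt, abs_nonneg D]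
        have hk12 : k₁ * k₂ = f ^ 2 := by
          have h4 : (2 * k₁) * (2 * k₂) = 4 * f ^ 2 := by rw [← g1, ← g2]; linear_combination hhD
          linarith only [h4]
        have hcopk : IsCoprime k₁ k₂ := by
          apply coprime_of_prime
          intro ℓ hℓ d1 d2
          have dh : ℓ ∣ |h'| := by
            have h : |h'| = k₁ + k₂ := by linarith only [g1, g2]
            exact h ▸ dvd_add d1 d2
          have dDa : ℓ ∣ |D| := by
            have h : |D| = k₂ - k₁ := by linarith only [g1, g2]
            exact h ▸ dvd_sub d2 d1
          have df : ℓ ∣ f := hℓ.dvd_of_dvd_pow (n := 2) (hk12 ▸ d1.mul_right k₂)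
          have dc : ℓ ∣ c := by
            apply hℓ.dvd_of_dvd_pow (n := 2)
            have h : c ^ 2 = |h'| ^ 2 - f ^ 2 := by rw [sq_abs]; linarith only [hch]
            exact h ▸ dvd_sub (dvd_pow dh two_ne_zero) (dvd_pow df two_ne_zero)
          exact kill_coprime hℓ hcopcD dc ((dvd_abs ℓ D).mp dDa)
        obtain ⟨kk, ll, hkk, hll, hfkl⟩ := sq_decomp hcopk hk12 hk₁pos hk₂pos
        have hh0form : |h'| = kk ^ 2 + ll ^ 2 := by
          have h : |h'| = k₁ + k₂ := by linarith only [g1, g2]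
          rw [h, hkk, hll]
        have hfsq : f ^ 2 = kk ^ 2 * ll ^ 2 := by
          rcases hfkl with h | h
          · linear_combination (f + kk * ll) * h
          · linear_combination (f - kk * ll) * h
        have hc2 : c ^ 2 = kk ^ 4 + kk ^ 2 * ll ^ 2 + ll ^ 4 := by
          have h : c ^ 2 = |h'| ^ 2 - f ^ 2 := by rw [sq_abs]; linarith only [hch]
          rw [h, hh0form]
          linear_combination -hfsq
        have hklne : kk * ll ≠ 0 := by
          intro h0; apply hfne
          have hf0 : f ^ 2 = 0 := by
            rw [hfsq]
            rcases mul_eq_zero.mp h0 with h | h <;> rw [h] <;> ring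
          exact pow_eq_zero_iff two_ne_zero |>.mp hf0
        have hcopkl : IsCoprime kk ll := by
          apply coprime_of_prime
          intro ℓ hℓ d1 d2
          exact kill_coprime hℓ hcopk (hkk ▸ dvd_pow d1 two_ne_zero)
            (hll ▸ dvd_pow d2 two_ne_zero)
        have hoddkl : Odd (kk + ll) := by
          apply odd_sum_of_odd_sq_add_sq
          rw [← hh0form]; exact hoddh0
        obtain ⟨γ, δ, hcopγδ, hγδne, hoddγδ, heqγδ⟩ := QtoR kk ll c hcopkl hklne hoddkl hc2
        have hne_h' : h' ≠ 0 := by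
          rintro rfl
          simp [Int.odd_iff] at hoddh
        have hlt : (kk ^ 2 + ll ^ 2).natAbs < n := by
          have h1 : (1:ℤ) ≤ |h'| := Int.one_le_abs hne_h'
          have h2 : |h'| ^ 2 = h' ^ 2 := sq_abs h'
          have habsle : |h'| ≤ h' ^ 2 := by nlinarith only [h1, h2, abs_nonneg h']
          have hf2le : f ^ 2 ≤ c ^ 2 := by linarith only [hD2f, hD2ge1, sq_nonneg f]
          have hnn : (0:ℤ) ≤ kk ^ 2 + ll ^ 2 := by positivity
          have hcast : ((kk ^ 2 + ll ^ 2).natAbs : ℤ) = kk ^ 2 + ll ^ 2 :=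
            Int.natAbs_of_nonneg hnn
          have h3lt : ((kk ^ 2 + ll ^ 2).natAbs : ℤ) < (w.natAbs : ℤ) := by
            rw [hcast, ← hh0form]
            linarith only [habsle, hch, hf2le, hD2ge1, hT, hwge, h2]
          rw [← hn]
          exact_mod_cast h3lt
        exact ih (kk ^ 2 + ll ^ 2).natAbs hlt (kk ^ 2 + ll ^ 2) γ δ rfl hcopγδ hγδne hoddγδ heqγδ
      · -- B1 : kills
        have hcopP : IsCoprime (D ^ 2 - c ^ 2) (D ^ 2 - 4 * c ^ 2) := by
          apply coprime_of_prime
          intro ℓ hℓ d1 d2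
          have hd3c : ℓ ∣ 3 * c ^ 2 := by
            have h : 3 * c ^ 2 = (D ^ 2 - c ^ 2) - (D ^ 2 - 4 * c ^ 2) := by ring
            exact h ▸ dvd_sub d1 d2
          have hℓn3 : ¬ (ℓ ∣ 3) := by
            intro hd3
            exact h3 (((hℓ.associated_of_dvd Int.prime_three hd3).symm.dvd).trans d2)
          have dc : ℓ ∣ c := by
            rcases hℓ.dvd_mul.mp hd3c with h' | h'
            · exact absurd h' hℓn3
            · exact hℓ.dvd_of_dvd_pow h'
          have dD : ℓ ∣ D := by
            apply hℓ.dvd_of_dvd_pow (n := 2)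
            have h : D ^ 2 = (D ^ 2 - c ^ 2) + c ^ 2 := by ring
            exact h ▸ dvd_add d1 (dvd_pow dc two_ne_zero)
          exact kill_coprime hℓ hcopcD dc dD
        obtain ⟨h', hh'⟩ := Int.sq_of_isCoprime hcopP.symm (show (D ^ 2 - 4 * c ^ 2) * (D ^ 2 - c ^ 2) = β ^ 2 by linear_combination -hβ2)
        rcases hh' with hh | hh
        · have hkill : ((2 * kD + 1) ^ 2 - 4 * (2 * jc + 1) ^ 2 : ℤ) = h' ^ 2 := by
            rw [← hkD, ← hjc]; linear_combination hh
          have hz8 := congrArg (fun x : ℤ => (x : ZMod 8)) hkill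
          push_cast at hz8
          exact zkillB1a _ _ _ hz8
        · have hkill : ((2 * kD + 1) ^ 2 - 4 * (2 * jc + 1) ^ 2 : ℤ) = -(h' ^ 2) := by
            rw [← hkD, ← hjc]; linear_combination hh
          have hz8 := congrArg (fun x : ℤ => (x : ZMod 8)) hkill
          push_cast at hz8
          exact zkillB1b _ _ _ hz8
  rcases Int.even_or_odd u₁ with hEu | hOu
  · -- u₁ even
    obtain ⟨mm, hmm⟩ := hEu
    have hmm2 : u₁ = 2 * mm := by linarith only [hmm]
    have hmpos : 0 < mm := by linarith only [hmm2, hu₁pos]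
    have hprod : mm * v₁ = α ^ 2 := by
      apply mul_left_cancel₀ (by norm_num : (2:ℤ) ≠ 0)
      linear_combination huv - v₁ * hmm2
    have hcop' : IsCoprime mm v₁ := by
      have h : IsCoprime ((2:ℤ) * mm) v₁ := by rwa [← hmm2]
      exact h.of_mul_left_right
    obtain ⟨c, D, hc, hD, hacd⟩ := sq_decomp hcop' hprod hmpos hv₁pos
    have hoddv : Odd v₁ := by
      have h : v₁ = |t| - u₁ := by linarith only [e1, e2]
      rw [h, hmm2]
      exact hoddt.sub_even ⟨mm, by ring⟩
    have hoddD : Odd D := odd_of_odd_sq (hD ▸ hoddv)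
    have hT : |t| = 2 * c ^ 2 + D ^ 2 := by
      rw [← hc, ← hD]; linarith only [e1, e2, hmm2]
    have hS : |s| ^ 2 = (D ^ 2 - 2 * c ^ 2) ^ 2 := by
      have h : |s| = D ^ 2 - 2 * c ^ 2 := by rw [← hc, ← hD]; linarith only [e1, e2, hmm2]
      rw [h]
    have ha2 : α ^ 2 = c ^ 2 * D ^ 2 := by
      rcases hacd with h | h
      · linear_combination (α + c * D) * h
      · linear_combination (α - c * D) * h
    have hcopcD : IsCoprime c D := by
      apply coprime_of_prime
      intro ℓ hℓ d1 d2
      exact kill_coprime hℓ hcop' (hc ▸ dvd_pow d1 two_ne_zero) (hD ▸ dvd_pow d2 two_ne_zero)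
    have hc0 : c ≠ 0 := by
      intro h0; apply hα
      have ha0 : α ^ 2 = 0 := by rw [ha2, h0]; ring
      exact pow_eq_zero_iff two_ne_zero |>.mp ha0
    have hD0 : D ≠ 0 := by
      intro h0; apply hα
      have ha0 : α ^ 2 = 0 := by rw [ha2, h0]; ring
      exact pow_eq_zero_iff two_ne_zero |>.mp ha0
    exact main c D hT hS ha2 hoddD hcopcD hc0 hD0
  · -- u₁ odd
    have hEv : Even v₁ := by
      rcases Int.even_or_odd v₁ with h | h
      · exact h
      · exfalso
        have hodd2 : Even (u₁ + v₁) := hOu.add_odd h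
        have h : |t| = u₁ + v₁ := by linarith only [e1, e2]
        exact (Int.not_odd_iff_even.mpr (h ▸ hodd2)) hoddt
    obtain ⟨mm, hmm⟩ := hEv
    have hmm2 : v₁ = 2 * mm := by linarith only [hmm]
    have hmpos : 0 < mm := by linarith only [hmm2, hv₁pos]
    have hprod : mm * u₁ = α ^ 2 := by
      apply mul_left_cancel₀ (by norm_num : (2:ℤ) ≠ 0)
      linear_combination huv - u₁ * hmm2
    have hcop' : IsCoprime mm u₁ := by
      have h : IsCoprime ((2:ℤ) * mm) u₁ := by rw [← hmm2]; exact hcopu.symm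
      exact h.of_mul_left_right
    obtain ⟨c, D, hc, hD, hacd⟩ := sq_decomp hcop' hprod hmpos hu₁pos
    have hoddD : Odd D := odd_of_odd_sq (hD ▸ hOu)
    have hT : |t| = 2 * c ^ 2 + D ^ 2 := by
      rw [← hc, ← hD]; linarith only [e1, e2, hmm2]
    have hS : |s| ^ 2 = (D ^ 2 - 2 * c ^ 2) ^ 2 := by
      have h : |s| = 2 * c ^ 2 - D ^ 2 := by rw [← hc, ← hD]; linarith only [e1, e2, hmm2]
      rw [h]; ring
    have ha2 : α ^ 2 = c ^ 2 * D ^ 2 := by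
      rcases hacd with h | h
      · linear_combination (α + c * D) * h
      · linear_combination (α - c * D) * h
    have hcopcD : IsCoprime c D := by
      apply coprime_of_prime
      intro ℓ hℓ d1 d2
      exact kill_coprime hℓ hcop' (hc ▸ dvd_pow d1 two_ne_zero) (hD ▸ dvd_pow d2 two_ne_zero)
    have hc0 : c ≠ 0 := by
      intro h0; apply hα
      have ha0 : α ^ 2 = 0 := by rw [ha2, h0]; ring
      exact pow_eq_zero_iff two_ne_zero |>.mp ha0
    have hD0 : D ≠ 0 := by
      intro h0; apply hα
      have ha0 : α ^ 2 = 0 := by rw [ha2, h0]; ring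
      exact pow_eq_zero_iff two_ne_zero |>.mp ha0
    exact main c D hT hS ha2 hoddD hcopcD hc0 hD0


/-- For a prime `n ≥ 7`, there is no primitive non-constant arithmetic progression
of integers of the form `x₁², x₂², x₃ⁿ, x₄², x₅²`. -/
theorem no_AP_22n22 (n : ℕ) (hn : n.Prime) (hn7 : 7 ≤ n) :
    ¬ ∃ (x₁ x₂ x₃ x₄ x₅ d : ℤ), d ≠ 0 ∧
      Int.gcd (x₁ ^ 2) (x₂ ^ 2) = 1 ∧
      x₂ ^ 2 - x₁ ^ 2 = d ∧
      x₃ ^ n - x₂ ^ 2 = d ∧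
      x₄ ^ 2 - x₃ ^ n = d ∧
      x₅ ^ 2 - x₄ ^ 2 = d := by
  rintro ⟨p, q, x₃, r, s5, d, hd0, hgcd, h1, h2, h3, h4⟩
  have hq : q ^ 2 - p ^ 2 = d := h1
  have hr : r ^ 2 - q ^ 2 = 2 * d := by linarith only [h2, h3]
  have hs : s5 ^ 2 - r ^ 2 = d := h4
  have hcpq : IsCoprime (p ^ 2) (q ^ 2) := Int.isCoprime_iff_gcd_eq_one.mpr hgcd
  have hcop : IsCoprime p q := by
    apply coprime_of_prime
    intro ℓ hℓ d1 d2
    exact kill_coprime hℓ hcpq (dvd_pow d1 two_ne_zero) (dvd_pow d2 two_ne_zero)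
  rcases Int.even_or_odd p with hp | hp <;> rcases Int.even_or_odd q with hq2 | hq2
  · -- both even : contradicts coprimality
    obtain ⟨a, ha⟩ := hp
    obtain ⟨b, hb⟩ := hq2
    exact kill_coprime Int.prime_two hcop ⟨a, by linarith only [ha]⟩ ⟨b, by linarith only [hb]⟩
  · -- p even, q odd : kill mod 8 (using r)
    obtain ⟨a, ha⟩ := hp
    have ha2 : p = 2 * a := by linarith only [ha]
    obtain ⟨b, hb⟩ := hq2
    have hoddr : Odd r := by
      apply odd_of_odd_sq
      have h : r ^ 2 = q ^ 2 + 2 * d := by linarith only [hr]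
      rw [h]
      have hoq : Odd q := ⟨b, hb⟩
      exact (hoq.pow).add_even ⟨d, by ring⟩
    obtain ⟨c, hc⟩ := hoddr
    have hkill : ((2 * c + 1) ^ 2 - (2 * b + 1) ^ 2 : ℤ) = 2 * ((2 * b + 1) ^ 2 - (2 * a) ^ 2) := by
      rw [← hc, ← hb, ← ha2]
      linarith only [hq, hr]
    have hz8 := congrArg (fun x : ℤ => (x : ZMod 8)) hkill
    push_cast at hz8
    exact zkill1 _ _ _ hz8
  · -- p odd, q even : kill mod 8 (using s₅)
    obtain ⟨a, ha⟩ := hp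
    obtain ⟨b, hb⟩ := hq2
    have hb2 : q = 2 * b := by linarith only [hb]
    have hodds5 : Odd s5 := by
      apply odd_of_odd_sq
      have h : s5 ^ 2 = 4 * q ^ 2 - 3 * p ^ 2 := by linarith only [hq, hr, hs]
      rw [h, hb2]
      have hop : Odd p := ⟨a, ha⟩
      rcases hop.pow (n := 2) with ⟨kk, hkk⟩
      exact ⟨8 * b ^ 2 - 3 * kk - 2, by linarith only [hkk]⟩
    obtain ⟨e, he⟩ := hodds5
    have hkill : ((2 * e + 1) ^ 2 - (2 * a + 1) ^ 2 : ℤ)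
        = 4 * ((2 * b) ^ 2 - (2 * a + 1) ^ 2) := by
      rw [← he, ← ha, ← hb2]
      linarith only [hq, hr, hs]
    have hz8 := congrArg (fun x : ℤ => (x : ZMod 8)) hkill
    push_cast at hz8
    exact zkill2 _ _ _ hz8
  · -- p odd, q odd : the main descent
    have hevend : Even d := by
      have h : d = q ^ 2 - p ^ 2 := hq.symm
      rw [h]
      exact (hq2.pow).sub_odd (hp.pow)
    have hoddr : Odd r := by
      apply odd_of_odd_sq
      have h : r ^ 2 = q ^ 2 + 2 * d := by linarith only [hr]
      rw [h]
      exact (hq2.pow).add_even ⟨d, by ring⟩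
    have hodds5 : Odd s5 := by
      apply odd_of_odd_sq
      have h : s5 ^ 2 = r ^ 2 + d := by linarith only [hs]
      rw [h]
      exact (hoddr.pow).add_even hevend
    obtain ⟨u0, hu⟩ := hodds5.add_odd hp
    obtain ⟨v0, hv⟩ := hodds5.sub_odd hp
    have hs5uv : s5 = u0 + v0 := by linarith only [hu, hv]
    have hpuv : p = u0 - v0 := by linarith only [hu, hv]
    have h4d : s5 ^ 2 - p ^ 2 = 4 * d := by linarith only [hq, hr, hs]
    have hduv : d = u0 * v0 := by
      have h : (u0 + v0) ^ 2 - (u0 - v0) ^ 2 = 4 * d := by rw [← hs5uv, ← hpuv]; exact h4d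
      linarith only [h, (by ring : (u0 + v0) ^ 2 - (u0 - v0) ^ 2 = 4 * (u0 * v0))]
    have hq2e : q ^ 2 = u0 ^ 2 - u0 * v0 + v0 ^ 2 := by
      have h : q ^ 2 = p ^ 2 + d := by linarith only [hq]
      rw [h, hpuv, hduv]; ring
    have hr2e : r ^ 2 = u0 ^ 2 + u0 * v0 + v0 ^ 2 := by
      have h : r ^ 2 = p ^ 2 + 3 * d := by linarith only [hq, hr]
      rw [h, hpuv, hduv]; ring
    have hne : u0 * v0 ≠ 0 := by rw [← hduv]; exact hd0
    have hcopuv : IsCoprime u0 v0 := by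
      apply coprime_of_prime
      intro ℓ hℓ d1 d2
      have hdp : ℓ ∣ p := hpuv ▸ dvd_sub d1 d2
      have hdq : ℓ ∣ q := by
        apply hℓ.dvd_of_dvd_pow (n := 2)
        rw [hq2e]
        exact dvd_add (dvd_sub (dvd_pow d1 two_ne_zero) (d1.mul_right v0))
          (dvd_pow d2 two_ne_zero)
      exact kill_coprime hℓ hcop hdp hdq
    have hparuv : Odd (u0 + v0) := hs5uv ▸ hodds5
    have hzq : (q * r) ^ 2 = u0 ^ 4 + u0 ^ 2 * v0 ^ 2 + v0 ^ 4 := by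
      rw [mul_pow, hq2e, hr2e]; ring
    obtain ⟨γ, δ, hcopγδ, hγδne, hoddγδ, heqγδ⟩ := QtoR u0 v0 (q * r) hcopuv hne hparuv hzq
    exact lemR (u0 ^ 2 + v0 ^ 2).natAbs (u0 ^ 2 + v0 ^ 2) γ δ rfl hcopγδ hγδne hoddγδ heqγδ
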